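/- Necessary attack condition for voting-based recovery (Lemma 3.5): fix finite index types ι and κ, a label type Y, a classifier f : Matrix ι κ ℝ → Y, a finite set B of binary ablation matrices, a binary patch region p, an image x, and labels y_maj and y_a. If some p-malicious version x' of x satisfies |{b ∈ B : f(ablated mutant of x' under b) = y_a}| ≥ |{b ∈ B : f(ablated mutant of x' under b) = y_maj}|, then |{b ∈ B : b disjoint from p and f(ablated mutant of x under b) = y_a}| + |{b ∈ B : b not disjoint from p}| ≥ |{b ∈ B : b disjoint from p and f(ablated mutant of x under b) = y_maj}|. -/
import Mathlib


/-- A binary matrix: all entries are 0 or 1. -/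
def IsBinary {ι κ : Type*} (a : Matrix ι κ ℝ) : Prop :=
  ∀ i j, a i j = 0 ∨ a i j = 1

/-- The ablation `b` is disjoint from the patch region `p`. -/
def DisjointFrom {ι κ : Type*} (b p : Matrix ι κ ℝ) : Prop :=
  ∀ i j, b i j * p i j = 0

/-- `x'` is a `p`-malicious version of `x`. -/
def MaliciousVersion {ι κ : Type*} (p x x' : Matrix ι κ ℝ) : Prop :=
  ∀ i j, p i j = 0 → x' i j = x i j

theorem ablate_eq {ι κ : Type*} {p x x' b : Matrix ι κ ℝ}
    (hm : MaliciousVersion p x x') (hd : DisjointFrom b p) :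
    (fun i j => x' i j * b i j) = (fun i j => x i j * b i j) := by
  funext i j
  by_cases hpij : p i j = 0
  · rw [hm i j hpij]
  · have hb : b i j = 0 := by
      have := hd i j
      rcases mul_eq_zero.mp this with h | h
      · exact h
      · exact absurd h hpij
    simp [hb]

/-- Necessary attack condition for voting-based recovery (Lemma 3.5). -/
theorem nac_voting {ι κ : Type*} [Fintype ι] [Fintype κ] {Y : Type*}
    (f : Matrix ι κ ℝ → Y)
    (B : Set (Matrix ι κ ℝ)) (hBfin : B.Finite) (hB : ∀ b ∈ B, IsBinary b)
    (p : Matrix ι κ ℝ) (hp : IsBinary p)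
    (x : Matrix ι κ ℝ) (y_maj y_a : Y)
    (hattack : ∃ x' : Matrix ι κ ℝ, MaliciousVersion p x x' ∧
      {b | b ∈ B ∧ f (fun i j => x' i j * b i j) = y_a}.ncard ≥
        {b | b ∈ B ∧ f (fun i j => x' i j * b i j) = y_maj}.ncard) :
    {b | b ∈ B ∧ DisjointFrom b p ∧ f (fun i j => x i j * b i j) = y_a}.ncard +
      {b | b ∈ B ∧ ¬ DisjointFrom b p}.ncard ≥
      {b | b ∈ B ∧ DisjointFrom b p ∧ f (fun i j => x i j * b i j) = y_maj}.ncard := by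
  obtain ⟨x', hm, hge⟩ := hattack
  set A' := {b | b ∈ B ∧ f (fun i j => x' i j * b i j) = y_a} with hA'
  set M' := {b | b ∈ B ∧ f (fun i j => x' i j * b i j) = y_maj} with hM'
  have hfin : ∀ S : Set (Matrix ι κ ℝ), S ⊆ B → S.Finite :=
    fun S hS => hBfin.subset hS
  -- target RHS set ⊆ M'
  have h1 : {b | b ∈ B ∧ DisjointFrom b p ∧ f (fun i j => x i j * b i j) = y_maj} ⊆ M' := by
    rintro b ⟨hb, hd, hf⟩
    exact ⟨hb, by rw [ablate_eq hm hd]; exact hf⟩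
  -- A' ⊆ union
  have h2 : A' ⊆ {b | b ∈ B ∧ DisjointFrom b p ∧ f (fun i j => x i j * b i j) = y_a} ∪
      {b | b ∈ B ∧ ¬ DisjointFrom b p} := by
    rintro b ⟨hb, hf⟩
    by_cases hd : DisjointFrom b p
    · left; exact ⟨hb, hd, by rw [← ablate_eq hm hd]; exact hf⟩
    · right; exact ⟨hb, hd⟩
  have hfinL : ({b | b ∈ B ∧ DisjointFrom b p ∧ f (fun i j => x i j * b i j) = y_a} ∪
      {b | b ∈ B ∧ ¬ DisjointFrom b p}).Finite :=
    (hfin _ (fun b hb => hb.1)).union (hfin _ (fun b hb => hb.1))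
  calc {b | b ∈ B ∧ DisjointFrom b p ∧ f (fun i j => x i j * b i j) = y_maj}.ncard
      ≤ M'.ncard := Set.ncard_le_ncard h1 (hfin _ (fun b hb => hb.1))
    _ ≤ A'.ncard := hge
    _ ≤ ({b | b ∈ B ∧ DisjointFrom b p ∧ f (fun i j => x i j * b i j) = y_a} ∪
          {b | b ∈ B ∧ ¬ DisjointFrom b p}).ncard := Set.ncard_le_ncard h2 hfinL
    _ ≤ _ := Set.ncard_union_le _ _
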